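/- arXiv:1901.04340 — 2 statements merged into one kernel-verified Lean document; each statement's English description precedes it below -/
import Mathlib

section
/- Sufficient optimality condition for the non-delayed state-linear problem (LP): Suppose (i) the functions f⁰, ∂f⁰/∂x, g⁰, A and g are continuous for all (t,x,u) ∈ [a,b] × ℝ^{n+m}; (ii) for each fixed t ∈ [a,b], the map x ↦ f⁰(t,x) is convex on ℝⁿ; (iii) u* is an admissible control with response x* such that for almost all t ∈ [a,b] the maximality condition H(t,x*(t),u*(t),η(t)) = max_{u∈Ω} H(t,x*(t),u,η(t)) holds, where H(t,x,u,η) = −[f⁰(t,x) + g⁰(t,u)] + η·[A(t)x + g(t,u)], and where η : [a,b] → ℝⁿ is a nontrivial solution of the adjoint system η̇(t) = ∂f⁰/∂x(t,x*(t)) − η(t)A(t) whose terminal value η(b) is an inward normal vector of Π at x*(b), i.e. ⟨η(b), y − x*(b)⟩ ≥ 0 for every y ∈ Π. Then u* is an optimal control: C[u*] ≤ C[u] for every admissible pair (x,u) of (LP) with x(b) ∈ Π. -/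
open MeasureTheory Set Matrix

section AuxLemmas
open Function
open scoped ENNReal NNReal
open MeasureTheory Set Matrix Function
open scoped ENNReal NNReal

/-- FTC-type inequality for continuous monotone functions. -/
lemma aux_monotone_integral_le_sub {f ψ : ℝ → ℝ} (hf : Monotone f) (hc : Continuous f)
    {a b : ℝ} (hab : a ≤ b)
    (hψ : ∀ᵐ t ∂(volume.restrict (Ioc a b)), HasDerivAt f (ψ t) t) :
    ∫ t in Ioc a b, ψ t ≤ f b - f a := by
  set μ := hf.stieltjesFunction.measure with hμ
  have hfd : ∀ᵐ t ∂(volume.restrict (Ioc a b)),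
      HasDerivAt f ((μ.rnDeriv volume t).toReal) t := ae_restrict_of_ae hf.ae_hasDerivAt
  have heq : ∀ᵐ t ∂(volume.restrict (Ioc a b)), ψ t = (μ.rnDeriv volume t).toReal := by
    filter_upwards [hψ, hfd] with t h1 h2
    exact h1.unique h2
  have hg : ∀ x : ℝ, hf.stieltjesFunction x = f x := by
    intro x
    rw [hf.stieltjesFunction_eq]
    exact rightLim_eq_of_tendsto
      (hc.continuousAt.tendsto.mono_left nhdsWithin_le_nhds)
  have hIoc : μ (Ioc a b) = ENNReal.ofReal (f b - f a) := by
    rw [hμ, StieltjesFunction.measure_Ioc, hg, hg]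
  calc ∫ t in Ioc a b, ψ t = ∫ t in Ioc a b, (μ.rnDeriv volume t).toReal :=
        integral_congr_ae heq
    _ ≤ (μ (Ioc a b)).toReal :=
        Measure.setIntegral_toReal_rnDeriv_le (by rw [hIoc]; exact ENNReal.ofReal_ne_top)
    _ = f b - f a := by rw [hIoc, ENNReal.toReal_ofReal (sub_nonneg.2 (hf hab))]

/-- FTC inequality for Lipschitz functions with a.e. derivative. -/
lemma aux_sub_le_integral {K : NNReal} {φ ψ : ℝ → ℝ} {a b : ℝ} (hab : a ≤ b)
    (hlip : LipschitzOnWith K φ (Icc a b))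
    (hae : ∀ᵐ t ∂(volume.restrict (Ioc a b)), HasDerivAt φ (ψ t) t)
    (hint : IntegrableOn ψ (Ioc a b)) :
    φ b - φ a ≤ ∫ t in Ioc a b, ψ t := by
  set c : ℝ → ℝ := fun t => max a (min t b) with hcdef
  have hmemc : ∀ t, c t ∈ Icc a b := fun t =>
    ⟨le_max_left _ _, max_le hab (min_le_right _ _)⟩
  have hcid : ∀ t ∈ Icc a b, c t = t := fun t ht => by
    simp [hcdef, min_eq_left ht.2, max_eq_right ht.1]
  have hclip : LipschitzWith 1 c := by
    apply LipschitzWith.of_dist_le_mul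
    intro s t
    simp only [Real.dist_eq, NNReal.coe_one, one_mul]
    calc |c s - c t| = |max (min s b) a - max (min t b) a| := by simp only [hcdef]; rw [max_comm a (min s b), max_comm a (min t b)]
      _ ≤ |min s b - min t b| := abs_max_sub_max_le_abs _ _ _
      _ ≤ max |s - t| |b - b| := abs_min_sub_min_le_max _ _ _ _
      _ = |s - t| := by simp
  have hφclip : LipschitzWith K (fun t => φ (c t)) := by
    apply LipschitzWith.of_dist_le_mul
    intro s t
    calc dist (φ (c s)) (φ (c t)) ≤ K * dist (c s) (c t) :=
          hlip.dist_le_mul _ (hmemc s) _ (hmemc t)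
      _ ≤ K * dist s t := by
          have := hclip.dist_le_mul s t
          simp only [NNReal.coe_one, one_mul] at this
          -- keep
          exact mul_le_mul_of_nonneg_left this K.coe_nonneg
  set F : ℝ → ℝ := fun t => (K : ℝ) * t - φ (c t) with hFdef
  have hFmono : Monotone F := by
    intro s t hst
    have h1 : |φ (c t) - φ (c s)| ≤ K * |t - s| := by
      have := hφclip.dist_le_mul t s
      simpa [Real.dist_eq] using this
    have h2 := (abs_le.1 h1).2
    simp only [hFdef]
    have h3 : |t - s| = t - s := abs_of_nonneg (by linarith)
    rw [h3] at h2
    linarith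
  have hFcont : Continuous F := (continuous_const.mul continuous_id).sub hφclip.continuous
  have hFderiv : ∀ᵐ t ∂(volume.restrict (Ioc a b)), HasDerivAt F ((K : ℝ) - ψ t) t := by
    have hne : ∀ᵐ t ∂(volume.restrict (Ioc a b)), t ≠ b := by
      refine ae_restrict_of_ae ?_
      have : (volume : Measure ℝ) {b} = 0 := measure_singleton b
      rw [ae_iff]
      simpa using this
    filter_upwards [hae, ae_restrict_mem measurableSet_Ioc, hne] with t ht htmem htb
    have htIoo : t ∈ Ioo a b := ⟨htmem.1, lt_of_le_of_ne htmem.2 htb⟩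
    have hev : (fun s => φ (c s)) =ᶠ[nhds t] φ := by
      filter_upwards [Ioo_mem_nhds htIoo.1 htIoo.2] with s hs
      rw [hcid s (Ioo_subset_Icc_self hs)]
    have hφc : HasDerivAt (fun s => φ (c s)) (ψ t) t := ht.congr_of_eventuallyEq hev
    have := ((hasDerivAt_id t).const_mul (K : ℝ)).sub hφc
    exact this.congr_deriv (by ring)
  have key := aux_monotone_integral_le_sub hFmono hFcont hab hFderiv
  have hKint : IntegrableOn (fun _ : ℝ => (K : ℝ)) (Ioc a b) := integrableOn_const (by
    rw [Real.volume_Ioc]; exact ENNReal.ofReal_ne_top)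
  have hsplit : ∫ t in Ioc a b, ((K : ℝ) - ψ t) = (∫ _ in Ioc a b, (K : ℝ)) - ∫ t in Ioc a b, ψ t :=
    integral_sub hKint hint
  have hconst : ∫ _ in Ioc a b, (K : ℝ) = (b - a) * K := by
    rw [setIntegral_const, Real.volume_real_Ioc_of_le hab,
      smul_eq_mul]
  have hFb : F b - F a = (K : ℝ) * b - (K : ℝ) * a - (φ b - φ a) := by
    simp only [hFdef]
    rw [hcid b (right_mem_Icc.2 hab), hcid a (left_mem_Icc.2 hab)]
    ring
  rw [hsplit, hconst, hFb] at key
  linarith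

lemma aux_continuousOn_sum {ι α : Type*} [TopologicalSpace α] (s : Finset ι) {t : Set α}
    {f : ι → α → ℝ} (h : ∀ i ∈ s, ContinuousOn (f i) t) :
    ContinuousOn (fun x => ∑ i ∈ s, f i x) t := by
  classical
  induction s using Finset.induction_on with
  | empty => simpa using continuousOn_const
  | insert _ _ hni ih =>
    simp only [Finset.sum_insert hni]
    exact (h _ (Finset.mem_insert_self _ _)).add (ih fun j hj => h j (Finset.mem_insert_of_mem hj))

lemma aux_lipOn_bound {s : Set ℝ} (hs : IsCompact s) {f : ℝ → ℝ}
    (hf : ∃ K, LipschitzOnWith K f s) : ∃ M : ℝ, 0 ≤ M ∧ ∀ x ∈ s, |f x| ≤ M := by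
  obtain ⟨K, hK⟩ := hf
  obtain ⟨M, hM⟩ := hs.exists_bound_of_continuousOn hK.continuousOn
  exact ⟨max M 0, le_max_right _ _, fun x hx => le_trans (by simpa using hM x hx) (le_max_left _ _)⟩

lemma aux_lipOn_mul {s : Set ℝ} (hs : IsCompact s) {f g : ℝ → ℝ}
    (hf : ∃ K, LipschitzOnWith K f s) (hg : ∃ K, LipschitzOnWith K g s) :
    ∃ K, LipschitzOnWith K (fun t => f t * g t) s := by
  obtain ⟨Mf, hMf0, hMf⟩ := aux_lipOn_bound hs hf
  obtain ⟨Mg, hMg0, hMg⟩ := aux_lipOn_bound hs hg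
  obtain ⟨Kf, hKf⟩ := hf
  obtain ⟨Kg, hKg⟩ := hg
  refine ⟨(Mf * Kg + Mg * Kf : ℝ).toNNReal, LipschitzOnWith.of_dist_le_mul fun x hx y hy => ?_⟩
  have h1 : dist (f x) (f y) ≤ Kf * dist x y := hKf.dist_le_mul x hx y hy
  have h2 : dist (g x) (g y) ≤ Kg * dist x y := hKg.dist_le_mul x hx y hy
  have : dist (f x * g x) (f y * g y) ≤ (Mf * Kg + Mg * Kf) * dist x y := by
    simp only [Real.dist_eq] at *
    calc |f x * g x - f y * g y| = |f x * (g x - g y) + g y * (f x - f y)| := by ring_nf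
      _ ≤ |f x * (g x - g y)| + |g y * (f x - f y)| := abs_add_le _ _
      _ = |f x| * |g x - g y| + |g y| * |f x - f y| := by rw [abs_mul, abs_mul]
      _ ≤ Mf * (Kg * |x - y|) + Mg * (Kf * |x - y|) := by
          have a1 : |f x| * |g x - g y| ≤ Mf * (Kg * |x - y|) :=
            mul_le_mul (hMf x hx) h2 (abs_nonneg _) hMf0
          have a2 : |g y| * |f x - f y| ≤ Mg * (Kf * |x - y|) :=
            mul_le_mul (hMg y hy) h1 (abs_nonneg _) hMg0
          linarith
      _ = (Mf * Kg + Mg * Kf) * |x - y| := by ring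
  refine this.trans ?_
  gcongr ?_ * _
  exact Real.le_coe_toNNReal _

lemma aux_lipOn_sub {s : Set ℝ} {f g : ℝ → ℝ}
    (hf : ∃ K, LipschitzOnWith K f s) (hg : ∃ K, LipschitzOnWith K g s) :
    ∃ K, LipschitzOnWith K (fun t => f t - g t) s := by
  obtain ⟨Kf, hKf⟩ := hf
  obtain ⟨Kg, hKg⟩ := hg
  refine ⟨Kf + Kg, LipschitzOnWith.of_dist_le_mul fun x hx y hy => ?_⟩
  have h1 := hKf.dist_le_mul x hx y hy
  have h2 := hKg.dist_le_mul x hx y hy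
  simp only [Real.dist_eq, NNReal.coe_add] at *
  calc |f x - g x - (f y - g y)| = |(f x - f y) + -(g x - g y)| := by ring_nf
    _ ≤ |f x - f y| + |g x - g y| := by
        refine (abs_add_le _ _).trans ?_
        rw [abs_neg]
    _ ≤ (Kf + Kg) * |x - y| := by nlinarith [abs_nonneg (x-y)]

lemma aux_lipOn_sum {s : Set ℝ} {k : ℕ} (F : Fin k → ℝ → ℝ)
    (h : ∀ i, ∃ K, LipschitzOnWith K (F i) s) :
    ∃ K, LipschitzOnWith K (fun t => ∑ i, F i t) s := by
  choose Ks hKs using h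
  refine ⟨∑ i, Ks i, LipschitzOnWith.of_dist_le_mul fun x hx y hy => ?_⟩
  simp only [Real.dist_eq] at *
  calc |∑ i, F i x - ∑ i, F i y| = |∑ i, (F i x - F i y)| := by rw [Finset.sum_sub_distrib]
    _ ≤ ∑ i, |F i x - F i y| := Finset.abs_sum_le_sum_abs _ _
    _ ≤ ∑ i, (Ks i : ℝ) * |x - y| := by
        refine Finset.sum_le_sum fun i _ => ?_
        have := (hKs i).dist_le_mul x hx y hy
        simpa [Real.dist_eq] using this
    _ = ((∑ i, Ks i : NNReal) : ℝ) * |x - y| := by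
        rw [← Finset.sum_mul]; push_cast; ring

/-- Composition `t ↦ F (t, u t)` with essentially bounded measurable `u` is integrable
on `Icc a b` when `F` is continuous on `Icc a b ×ˢ univ`. -/
lemma aux_integrableOn_comp {m : ℕ} {a b : ℝ} (hab : a ≤ b) {F : ℝ × (Fin m → ℝ) → ℝ}
    (hF : ContinuousOn F (Icc a b ×ˢ (univ : Set (Fin m → ℝ))))
    {u : ℝ → Fin m → ℝ} (hu : MemLp u ⊤ (volume.restrict (Icc a b))) :
    IntegrableOn (fun t => F (t, u t)) (Icc a b) := by
  haveI : IsFiniteMeasure (volume.restrict (Icc a b)) :=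
    ⟨by rw [Measure.restrict_apply_univ]; exact measure_Icc_lt_top⟩
  have hfin : eLpNormEssSup u (volume.restrict (Icc a b)) < ⊤ := by
    have := hu.2; rwa [eLpNorm_exponent_top] at this
  set C : ℝ := (eLpNormEssSup u (volume.restrict (Icc a b))).toReal with hC
  have huC : ∀ᵐ t ∂(volume.restrict (Icc a b)), ‖u t‖ ≤ C := by
    filter_upwards [ae_le_eLpNormEssSup (f := u) (μ := volume.restrict (Icc a b))] with t ht
    have : ((‖u t‖₊ : ℝ≥0∞)).toReal ≤ C := ENNReal.toReal_mono hfin.ne ht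
    simpa using this
  set c : ℝ → ℝ := fun t => max a (min t b) with hcdef
  have hmemc : ∀ t, c t ∈ Icc a b := fun t => ⟨le_max_left _ _, max_le hab (min_le_right _ _)⟩
  have hcid : ∀ t ∈ Icc a b, c t = t := fun t ht => by
    simp [hcdef, min_eq_left ht.2, max_eq_right ht.1]
  have hccont : Continuous c := continuous_const.max (continuous_id.min continuous_const)
  set Fc : ℝ × (Fin m → ℝ) → ℝ := fun p => F (c p.1, p.2) with hFcdef
  have hFccont : Continuous Fc := by
    apply hF.comp_continuous (hccont.comp continuous_fst |>.prodMk continuous_snd)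
    exact fun p => ⟨hmemc p.1, mem_univ _⟩
  have huaesm : AEStronglyMeasurable u (volume.restrict (Icc a b)) := hu.1
  have hFm : AEStronglyMeasurable (fun t => F (t, u t)) (volume.restrict (Icc a b)) := by
    have h1 : AEStronglyMeasurable (fun t => Fc (t, u t)) (volume.restrict (Icc a b)) :=
      hFccont.comp_aestronglyMeasurable (aestronglyMeasurable_id.prodMk huaesm)
    refine h1.congr ?_
    filter_upwards [ae_restrict_mem measurableSet_Icc] with t ht
    simp only [hFcdef, hcid t ht]
  -- bound
  set Kset : Set (ℝ × (Fin m → ℝ)) := Icc a b ×ˢ Metric.closedBall 0 C with hKdef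
  have hKcomp : IsCompact Kset := isCompact_Icc.prod (isCompact_closedBall _ _)
  obtain ⟨M, hM⟩ := hKcomp.exists_bound_of_continuousOn
    (hF.mono (prod_mono_right (subset_univ _)))
  refine Integrable.mono' (integrable_const M) hFm ?_
  filter_upwards [huC, ae_restrict_mem measurableSet_Icc] with t htC ht
  have : (t, u t) ∈ Kset := ⟨ht, by simpa [Metric.mem_closedBall, dist_zero_right] using htC⟩
  exact hM _ this

end AuxLemmas

noncomputable section

/-- An admissible process for the non-delayed state-linear problem (LP):
`x` is Lipschitz on `[a,b]` (i.e. `W^{1,∞}`), `u` is essentially bounded measurable with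
values in `Ω`, the control system `ẋ(t) = A(t)x(t) + g(t,u(t))` holds for almost all
`t ∈ [a,b]`, and `x(a) = xa`. -/
def IsAdmissibleLP {n m : ℕ} (a b : ℝ) (A : ℝ → Matrix (Fin n) (Fin n) ℝ)
    (g : ℝ → (Fin m → ℝ) → (Fin n → ℝ)) (Ω : Set (Fin m → ℝ)) (xa : Fin n → ℝ)
    (x : ℝ → (Fin n → ℝ)) (u : ℝ → (Fin m → ℝ)) : Prop :=
  (∃ K, LipschitzOnWith K x (Icc a b)) ∧
  MemLp u ⊤ (volume.restrict (Icc a b)) ∧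
  (∀ t ∈ Icc a b, u t ∈ Ω) ∧
  x a = xa ∧
  (∀ᵐ t ∂(volume.restrict (Icc a b)),
    HasDerivAt x (A t *ᵥ x t + g t (u t)) t)

/-- Hamiltonian of (LP): `H(t,x,u,η) = −[f⁰(t,x) + g⁰(t,u)] + η·[A(t)x + g(t,u)]`. -/
def H_LP {n m : ℕ} (A : ℝ → Matrix (Fin n) (Fin n) ℝ)
    (f0 : ℝ → (Fin n → ℝ) → ℝ) (g0 : ℝ → (Fin m → ℝ) → ℝ)
    (g : ℝ → (Fin m → ℝ) → (Fin n → ℝ))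
    (t : ℝ) (x : Fin n → ℝ) (u : Fin m → ℝ) (η : Fin n → ℝ) : ℝ :=
  -(f0 t x + g0 t u) + η ⬝ᵥ (A t *ᵥ x + g t u)

/-- Sufficient optimality condition for the non-delayed state-linear problem (LP). -/
theorem lp_sufficient_optimality
    {n m : ℕ} {a b : ℝ} (hab : a < b)
    (Ω : Set (Fin m → ℝ)) (Pset : Set (Fin n → ℝ))
    (hPclosed : IsClosed Pset) (hPconvex : Convex ℝ Pset) (xa : Fin n → ℝ)
    (A : ℝ → Matrix (Fin n) (Fin n) ℝ)
    (f0 : ℝ → (Fin n → ℝ) → ℝ) (f0x : ℝ → (Fin n → ℝ) → (Fin n → ℝ))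
    (g0 : ℝ → (Fin m → ℝ) → ℝ) (g : ℝ → (Fin m → ℝ) → (Fin n → ℝ))
    -- `f0x t x` is the gradient `∂f⁰/∂x (t,x)` of `f⁰` with respect to `x`
    (hdiff : ∀ t ∈ Icc a b, ∀ x : Fin n → ℝ,
      HasFDerivAt (f0 t)
        (∑ i : Fin n, f0x t x i • ContinuousLinearMap.proj (R := ℝ) (φ := fun _ : Fin n => ℝ) i) x)
    -- (i) continuity of `f⁰`, `∂f⁰/∂x`, `g⁰`, `A` and `g` on `[a,b] × ℝ^{n+m}`
    (hf0cont : ContinuousOn (fun p : ℝ × (Fin n → ℝ) => f0 p.1 p.2) (Icc a b ×ˢ univ))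
    (hf0xcont : ContinuousOn (fun p : ℝ × (Fin n → ℝ) => f0x p.1 p.2) (Icc a b ×ˢ univ))
    (hg0cont : ContinuousOn (fun p : ℝ × (Fin m → ℝ) => g0 p.1 p.2) (Icc a b ×ˢ univ))
    (hAcont : ContinuousOn A (Icc a b))
    (hgcont : ContinuousOn (fun p : ℝ × (Fin m → ℝ) => g p.1 p.2) (Icc a b ×ˢ univ))
    -- (ii) convexity of `x ↦ f⁰(t,x)` for each fixed `t ∈ [a,b]`
    (hconv : ∀ t ∈ Icc a b, ConvexOn ℝ univ (f0 t))
    -- (iii) `u*` is an admissible control with response `x*` satisfying the terminal constraint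
    (xs : ℝ → (Fin n → ℝ)) (us : ℝ → (Fin m → ℝ))
    (hadm : IsAdmissibleLP a b A g Ω xa xs us)
    (hterm : xs b ∈ Pset)
    -- `η` is a nontrivial solution of the adjoint system `η̇(t) = ∂f⁰/∂x(t,x*(t)) − η(t)A(t)`
    (η : ℝ → (Fin n → ℝ))
    (hadj : ∀ t ∈ Icc a b,
      HasDerivAt η (f0x t (xs t) - Matrix.vecMul (η t) (A t)) t)
    (hnontrivial : ∃ t ∈ Icc a b, η t ≠ 0)
    -- transversality: `η(b)` is an inward normal of `Π` at `x*(b)`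
    (htransv : ∀ y ∈ Pset, 0 ≤ η b ⬝ᵥ (y - xs b))
    -- maximality condition for almost all `t ∈ [a,b]`
    (hmax : ∀ᵐ t ∂(volume.restrict (Icc a b)), ∀ u ∈ Ω,
      H_LP A f0 g0 g t (xs t) u (η t) ≤ H_LP A f0 g0 g t (xs t) (us t) (η t)) :
    -- then `u*` is optimal: `C[u*] ≤ C[u]` for every admissible `(x,u)` with `x(b) ∈ Π`
    ∀ x u, IsAdmissibleLP a b A g Ω xa x u → x b ∈ Pset →
      (∫ t in a..b, (f0 t (xs t) + g0 t (us t))) ≤ ∫ t in a..b, (f0 t (x t) + g0 t (u t)) := by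
  intro x u hadm2 hterm2
  obtain ⟨⟨Kx, hxlip⟩, hu_mem, huΩ, hxa, hode⟩ := hadm2
  obtain ⟨⟨Ks, hslip⟩, hus_mem, husΩ, hsa, hsode⟩ := hadm
  have hab' : a ≤ b := hab.le
  have hxcont : ContinuousOn x (Icc a b) := hxlip.continuousOn
  have hscont : ContinuousOn xs (Icc a b) := hslip.continuousOn
  have hηcont : ContinuousOn η (Icc a b) := fun t ht =>
    ((hadj t ht).continuousAt).continuousWithinAt
  -- restriction measure on Ioc
  have hres : (volume.restrict (Ioc a b)) ≤ (volume.restrict (Icc a b)) :=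
    Measure.restrict_mono Ioc_subset_Icc_self le_rfl
  -- continuity of the adjoint derivative
  have hmapsIcc : ∀ f : ℝ → (Fin n → ℝ), MapsTo (fun t => (t, f t)) (Icc a b)
      (Icc a b ×ˢ (univ : Set (Fin n → ℝ))) := fun f t ht => ⟨ht, mem_univ _⟩
  have hf0xs_cont : ContinuousOn (fun t => f0x t (xs t)) (Icc a b) :=
    hf0xcont.comp (continuousOn_id.prodMk hscont) (hmapsIcc xs)
  have hηA_cont : ContinuousOn (fun t => η t ᵥ* A t) (Icc a b) := by
    apply continuousOn_pi.2
    intro j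
    have heq : (fun t => (η t ᵥ* A t) j) = fun t => ∑ i, η t i * A t i j := by
      funext t; simp [Matrix.vecMul, dotProduct]
    rw [heq]
    refine aux_continuousOn_sum _ fun i _ =>
      ((continuous_apply i).comp_continuousOn hηcont).mul ?_
    have h1 : ContinuousOn (fun t => A t i) (Icc a b) :=
      (continuous_apply i).comp_continuousOn hAcont
    exact (continuous_apply j).comp_continuousOn h1
  have hηd_cont : ContinuousOn (fun t => f0x t (xs t) - η t ᵥ* A t) (Icc a b) :=
    hf0xs_cont.sub hηA_cont
  obtain ⟨Mη, hMη⟩ := isCompact_Icc.exists_bound_of_continuousOn hηd_cont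
  have hηlip : LipschitzOnWith (Real.toNNReal Mη) η (Icc a b) := by
    apply (convex_Icc a b).lipschitzOnWith_of_nnnorm_hasDerivWithin_le
      (fun t ht => (hadj t ht).hasDerivWithinAt)
    intro t ht
    rw [← norm_toNNReal]
    exact Real.toNNReal_mono (hMη t ht)
  -- φ and ψ
  set φ : ℝ → ℝ := fun t => η t ⬝ᵥ (x t - xs t) with hφdef
  set ψ : ℝ → ℝ := fun t =>
    f0x t (xs t) ⬝ᵥ (x t - xs t) + η t ⬝ᵥ (g t (u t) - g t (us t)) with hψdef
  -- Lipschitzness of φ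
  have hφlipE : ∃ K, LipschitzOnWith K φ (Icc a b) := by
    have heq : φ = fun t => ∑ i, η t i * (x t i - xs t i) := by
      funext t; simp [hφdef, dotProduct]
    rw [heq]
    refine aux_lipOn_sum _ fun i => aux_lipOn_mul isCompact_Icc
      ⟨_, (LipschitzWith.eval i).comp_lipschitzOnWith hηlip⟩
      (aux_lipOn_sub ⟨_, (LipschitzWith.eval i).comp_lipschitzOnWith hxlip⟩
        ⟨_, (LipschitzWith.eval i).comp_lipschitzOnWith hslip⟩)
  obtain ⟨Kφ, hφlip⟩ := hφlipE
  -- a.e. derivative of φ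
  have hφode : ∀ᵐ t ∂(volume.restrict (Ioc a b)), HasDerivAt φ (ψ t) t := by
    filter_upwards [ae_mono hres hode, ae_mono hres hsode,
      ae_restrict_mem measurableSet_Ioc] with t hx' hs' ht
    have htI : t ∈ Icc a b := Ioc_subset_Icc_self ht
    have hη' := hadj t htI
    have hD : HasDerivAt (fun s => ∑ i, η s i * (x s i - xs s i))
        (∑ i, ((f0x t (xs t) - η t ᵥ* A t) i * (x t i - xs t i) +
          η t i * ((A t *ᵥ x t + g t (u t)) i - (A t *ᵥ xs t + g t (us t)) i))) t := by
      refine HasDerivAt.fun_sum fun i _ => ?_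
      exact (hasDerivAt_pi.1 hη' i).mul ((hasDerivAt_pi.1 hx' i).sub (hasDerivAt_pi.1 hs' i))
    have hφeq : φ = fun s => ∑ i, η s i * (x s i - xs s i) := by
      funext s; simp [hφdef, dotProduct]
    rw [hφeq]
    convert hD using 1
    have hsum : (∑ i, ((f0x t (xs t) - η t ᵥ* A t) i * (x t i - xs t i) +
          η t i * ((A t *ᵥ x t + g t (u t)) i - (A t *ᵥ xs t + g t (us t)) i)))
        = (f0x t (xs t) - η t ᵥ* A t) ⬝ᵥ (x t - xs t) +
          η t ⬝ᵥ ((A t *ᵥ x t + g t (u t)) - (A t *ᵥ xs t + g t (us t))) := by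
      simp [dotProduct, Finset.sum_add_distrib]
    rw [hsum]
    have h1 : (A t *ᵥ x t + g t (u t)) - (A t *ᵥ xs t + g t (us t))
        = A t *ᵥ (x t - xs t) + (g t (u t) - g t (us t)) := by
      rw [Matrix.mulVec_sub]; abel
    rw [hψdef, h1, dotProduct_add, sub_dotProduct, dotProduct_mulVec]
    ring
  -- convexity inequality
  have hconvkey : ∀ t ∈ Icc a b,
      f0x t (xs t) ⬝ᵥ (x t - xs t) ≤ f0 t (x t) - f0 t (xs t) := by
    intro t ht
    set L : ℝ →ᵃ[ℝ] (Fin n → ℝ) := AffineMap.lineMap (xs t) (x t) with hLdef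
    have hq : ConvexOn ℝ univ (fun s : ℝ => f0 t (L s)) := by
      have := (hconv t ht).comp_affineMap L
      exact this
    have hLd : HasDerivAt (fun s : ℝ => L s) (x t - xs t) 0 := by
      have : (fun s : ℝ => L s) = fun s : ℝ => s • (x t - xs t) + xs t := by
        funext s; rw [hLdef]; exact AffineMap.lineMap_apply_module' _ _ _
      rw [this]
      simpa using ((hasDerivAt_id (0:ℝ)).smul_const (x t - xs t)).add_const (xs t)
    have hcomp : HasDerivAt (fun s : ℝ => f0 t (L s)) (f0x t (xs t) ⬝ᵥ (x t - xs t)) 0 := by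
      have hF := hdiff t ht (L 0)
      have hc := hF.comp_hasDerivAt 0 hLd
      have hL0 : L 0 = xs t := AffineMap.lineMap_apply_zero _ _
      rw [hL0] at hc
      refine HasDerivAt.congr_deriv hc ?_
      simp [ContinuousLinearMap.sum_apply, dotProduct]
    have hsl := hq.le_slope_of_hasDerivAt (mem_univ (0:ℝ)) (mem_univ (1:ℝ)) one_pos hcomp
    rw [slope_def_field] at hsl
    have hL1 : L 1 = x t := AffineMap.lineMap_apply_one _ _
    have hL0 : L 0 = xs t := AffineMap.lineMap_apply_zero _ _
    rw [hL1, hL0] at hsl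
    simpa using hsl
  -- pointwise cost inequality a.e.
  have hcost : ∀ᵐ t ∂(volume.restrict (Ioc a b)),
      ψ t ≤ (f0 t (x t) + g0 t (u t)) - (f0 t (xs t) + g0 t (us t)) := by
    filter_upwards [ae_mono hres hmax, ae_restrict_mem measurableSet_Ioc] with t hH ht
    have htI : t ∈ Icc a b := Ioc_subset_Icc_self ht
    have hHu := hH (u t) (huΩ t htI)
    simp only [H_LP, dotProduct_add] at hHu
    have hgsub := dotProduct_sub (η t) (g t (u t)) (g t (us t))
    have hck := hconvkey t htI
    rw [hψdef]
    simp only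
    rw [hgsub]
    linarith
  -- integrability
  have hf0x_int : IntegrableOn (fun t => f0 t (x t)) (Icc a b) :=
    (hf0cont.comp (continuousOn_id.prodMk hxcont) (hmapsIcc x)).integrableOn_Icc
  have hf0s_int : IntegrableOn (fun t => f0 t (xs t)) (Icc a b) :=
    (hf0cont.comp (continuousOn_id.prodMk hscont) (hmapsIcc xs)).integrableOn_Icc
  have hg0u_int : IntegrableOn (fun t => g0 t (u t)) (Icc a b) :=
    aux_integrableOn_comp hab' hg0cont hu_mem
  have hg0s_int : IntegrableOn (fun t => g0 t (us t)) (Icc a b) :=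
    aux_integrableOn_comp hab' hg0cont hus_mem
  -- integrability of ψ
  have hηg_cont : ContinuousOn (fun p : ℝ × (Fin m → ℝ) => η p.1 ⬝ᵥ g p.1 p.2)
      (Icc a b ×ˢ univ) := by
    have hη1 : ContinuousOn (fun p : ℝ × (Fin m → ℝ) => η p.1) (Icc a b ×ˢ univ) :=
      hηcont.comp continuousOn_fst (fun p hp => hp.1)
    have heq : (fun p : ℝ × (Fin m → ℝ) => η p.1 ⬝ᵥ g p.1 p.2)
        = fun p => ∑ i, η p.1 i * g p.1 p.2 i := by
      funext p; simp [dotProduct]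
    rw [heq]
    exact aux_continuousOn_sum _ fun i _ =>
      ((continuous_apply i).comp_continuousOn hη1).mul
        ((continuous_apply i).comp_continuousOn hgcont)
  have hψ2a_int : IntegrableOn (fun t => η t ⬝ᵥ g t (u t)) (Icc a b) :=
    aux_integrableOn_comp hab' hηg_cont hu_mem
  have hψ2b_int : IntegrableOn (fun t => η t ⬝ᵥ g t (us t)) (Icc a b) :=
    aux_integrableOn_comp hab' hηg_cont hus_mem
  have hψ1_cont : ContinuousOn (fun t => f0x t (xs t) ⬝ᵥ (x t - xs t)) (Icc a b) := by
    have heq : (fun t => f0x t (xs t) ⬝ᵥ (x t - xs t))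
        = fun t => ∑ i, f0x t (xs t) i * (x t i - xs t i) := by
      funext t; simp [dotProduct]
    rw [heq]
    exact aux_continuousOn_sum _ fun i _ =>
      ((continuous_apply i).comp_continuousOn hf0xs_cont).mul
        (((continuous_apply i).comp_continuousOn hxcont).sub
          ((continuous_apply i).comp_continuousOn hscont))
  have hψ_int : IntegrableOn ψ (Ioc a b) := by
    have heq : ψ = fun t => f0x t (xs t) ⬝ᵥ (x t - xs t) +
        (η t ⬝ᵥ g t (u t) - η t ⬝ᵥ g t (us t)) := by
      funext t; rw [hψdef]; simp [dotProduct_sub]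
    rw [heq]
    have : IntegrableOn (fun t => f0x t (xs t) ⬝ᵥ (x t - xs t) +
        (η t ⬝ᵥ g t (u t) - η t ⬝ᵥ g t (us t))) (Icc a b) :=
      hψ1_cont.integrableOn_Icc.add (hψ2a_int.sub hψ2b_int)
    exact this.mono_set Ioc_subset_Icc_self
  -- integrability of cost difference
  have hD_int : IntegrableOn (fun t => (f0 t (x t) + g0 t (u t)) -
      (f0 t (xs t) + g0 t (us t))) (Ioc a b) := by
    have : IntegrableOn (fun t => (f0 t (x t) + g0 t (u t)) -
        (f0 t (xs t) + g0 t (us t))) (Icc a b) :=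
      (hf0x_int.add hg0u_int).sub (hf0s_int.add hg0s_int)
    exact this.mono_set Ioc_subset_Icc_self
  -- FTC inequality
  have hFTC : φ b - φ a ≤ ∫ t in Ioc a b, ψ t :=
    aux_sub_le_integral hab' hφlip hφode hψ_int
  have hmono : (∫ t in Ioc a b, ψ t) ≤ ∫ t in Ioc a b,
      ((f0 t (x t) + g0 t (u t)) - (f0 t (xs t) + g0 t (us t))) :=
    integral_mono_ae hψ_int hD_int hcost
  have hφa : φ a = 0 := by
    rw [hφdef]; simp only; rw [hxa, hsa, sub_self, dotProduct_zero]
  have hφb : 0 ≤ φ b := htransv (x b) hterm2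
  have hsplit : (∫ t in Ioc a b, ((f0 t (x t) + g0 t (u t)) - (f0 t (xs t) + g0 t (us t))))
      = (∫ t in Ioc a b, (f0 t (x t) + g0 t (u t)))
        - ∫ t in Ioc a b, (f0 t (xs t) + g0 t (us t)) :=
    by
    have h1 : IntegrableOn (fun t => f0 t (x t) + g0 t (u t)) (Icc a b) :=
      hf0x_int.add hg0u_int
    have h2 : IntegrableOn (fun t => f0 t (xs t) + g0 t (us t)) (Icc a b) :=
      hf0s_int.add hg0s_int
    exact integral_sub (h1.mono_set Ioc_subset_Icc_self) (h2.mono_set Ioc_subset_Icc_self)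
  rw [intervalIntegral.integral_of_le hab', intervalIntegral.integral_of_le hab']
  rw [hsplit] at hmono
  linarith

end
end

section
/- State trajectory verification in the example: Define u : [−1,4] → ℝ by u(t) = 0 for t ∈ [−1,0), u(t) = (e^{3−t} − t e^{1−t})/20 for t ∈ [0,1), u(t) = (e^{3−t} − 1)/20 for t ∈ [1,3], u(t) = 0 for t ∈ (3,4], and define x : [−2,4] → ℝ by x(t) = 1 on [−2,0]; x(t) = −1 + 2e^t on (0,1]; x(t) = ((e² + 2e⁴ − 2e²t)e^{−t} − 8 + (17 − 2e²)e^t)/8 on (1,2]; x(t) = (2e^{4−t} + 4 + (−47e^{−2} + 17 − 2e² + 16e^{−2}t)e^t)/8 on (2,3]; x(t) = ((−e⁶ + e⁴t)e^{−t} + 4 + (−51e^{−2} + 24 − 2e² + 17e^{−2}t − 2t)e^t)/8 on (3,4]. Then x is continuous on [−2,4] and satisfies the delayed differential equation ẋ(t) = x(t) + x(t−2) − 10 u(t−1) for all t in each of the open intervals (0,1), (1,2), (2,3) and (3,4). -/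
open Set Real

noncomputable section

/-- The candidate optimal control of the example. -/
def uex : ℝ → ℝ := fun t =>
  if t < 0 then 0
  else if t < 1 then (Real.exp (3 - t) - t * Real.exp (1 - t)) / 20
  else if t ≤ 3 then (Real.exp (3 - t) - 1) / 20
  else 0

/-- The candidate optimal state trajectory of the example. -/
def xex : ℝ → ℝ := fun t =>
  if t ≤ 0 then 1
  else if t ≤ 1 then -1 + 2 * Real.exp t
  else if t ≤ 2 then
    ((Real.exp 2 + 2 * Real.exp 4 - 2 * Real.exp 2 * t) * Real.exp (-t) - 8
      + (17 - 2 * Real.exp 2) * Real.exp t) / 8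
  else if t ≤ 3 then
    (2 * Real.exp (4 - t) + 4
      + (-47 * Real.exp (-2 : ℝ) + 17 - 2 * Real.exp 2 + 16 * Real.exp (-2 : ℝ) * t)
          * Real.exp t) / 8
  else
    ((-Real.exp 6 + Real.exp 4 * t) * Real.exp (-t) + 4
      + (-51 * Real.exp (-2 : ℝ) + 24 - 2 * Real.exp 2 + 17 * Real.exp (-2 : ℝ) * t - 2 * t)
          * Real.exp t) / 8

lemma hE2 : Real.exp 2 = Real.exp 1 * Real.exp 1 := by
  rw [← Real.exp_add]; norm_num
lemma hE3 : Real.exp 3 = Real.exp 1 * Real.exp 1 * Real.exp 1 := by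
  rw [show (3:ℝ) = 1+1+1 by norm_num, Real.exp_add, Real.exp_add]
lemma hE4 : Real.exp 4 = Real.exp 1 * Real.exp 1 * Real.exp 1 * Real.exp 1 := by
  rw [show (4:ℝ) = 1+1+1+1 by norm_num, Real.exp_add, Real.exp_add, Real.exp_add]
lemma hE6 : Real.exp 6 = Real.exp 1 * Real.exp 1 * Real.exp 1 * Real.exp 1 * Real.exp 1 * Real.exp 1 := by
  rw [show (6:ℝ) = 1+1+1+1+1+1 by norm_num]
  rw [Real.exp_add, Real.exp_add, Real.exp_add, Real.exp_add, Real.exp_add]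

lemma xex_cont : Continuous xex := by
  unfold xex
  apply Continuous.if_le continuous_const _ continuous_id continuous_const
  · intro x hx
    subst hx
    norm_num [Real.exp_zero]
  apply Continuous.if_le (by fun_prop) _ continuous_id continuous_const
  · intro x hx
    subst hx
    rw [if_pos (by norm_num : (1:ℝ) ≤ 2), Real.exp_neg]
    rw [hE2, hE4]
    have := Real.exp_ne_zero 1
    field_simp
    ring
  apply Continuous.if_le (by fun_prop) _ continuous_id continuous_const
  · intro x hx
    subst hx
    rw [if_pos (by norm_num : (2:ℝ) ≤ 3)]; simp only [Real.exp_neg]; rw [show (4:ℝ)-2 = 2 by norm_num]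
    rw [hE2, hE4]
    have := Real.exp_ne_zero 1
    field_simp
    ring
  apply Continuous.if_le (by fun_prop) (by fun_prop) continuous_id continuous_const
  · intro x hx
    subst hx
    simp only [Real.exp_neg]; rw [show (4:ℝ)-3 = 1 by norm_num]
    rw [hE2, hE3, hE4, hE6]
    have := Real.exp_ne_zero 1
    field_simp
    ring

lemma key (a b c d e : ℝ) (t : ℝ) :
    HasDerivAt (fun t => ((a + b*t)*Real.exp (-t) + c + (d + e*t)*Real.exp t)/8)
      (((b - a - b*t)*Real.exp (-t) + (e + d + e*t)*Real.exp t)/8) t := by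
  have h1 : HasDerivAt (fun t : ℝ => a + b*t) b t := by
    exact (((hasDerivAt_id t).const_mul b).const_add a).congr_deriv (mul_one b)
  have h2 : HasDerivAt (fun t : ℝ => Real.exp (-t)) (Real.exp (-t) * (-1)) t :=
    (hasDerivAt_neg t).exp
  have h3 : HasDerivAt (fun t : ℝ => d + e*t) e t := by
    exact (((hasDerivAt_id t).const_mul e).const_add d).congr_deriv (mul_one e)
  have h4 := Real.hasDerivAt_exp t
  have := (((h1.mul h2).add_const c).add (h3.mul h4)).div_const 8
  refine this.congr_deriv ?_
  ring

/-- State trajectory verification in the example: `x` is continuous on `[−2,4]` and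
satisfies the delayed differential equation `ẋ(t) = x(t) + x(t−2) − 10u(t−1)` on each of
the open intervals `(0,1)`, `(1,2)`, `(2,3)` and `(3,4)`. -/
theorem state_trajectory_example :
    ContinuousOn xex (Icc (-2 : ℝ) 4) ∧
    (∀ t : ℝ, t ∈ Ioo (0 : ℝ) 1 ∨ t ∈ Ioo (1 : ℝ) 2 ∨ t ∈ Ioo (2 : ℝ) 3 ∨ t ∈ Ioo (3 : ℝ) 4 →
      HasDerivAt xex (xex t + xex (t - 2) - 10 * uex (t - 1)) t) := by
  constructor
  · exact xex_cont.continuousOn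
  intro t ht
  have hne := Real.exp_ne_zero t
  have hne1 := Real.exp_ne_zero 1
  have hne2 := Real.exp_ne_zero 2
  rcases ht with ht | ht | ht | ht
  · -- (0,1)
    obtain ⟨h1, h2⟩ := ht
    have heq : xex =ᶠ[nhds t]
        (fun t => ((0 + 0*t)*Real.exp (-t) + (-8) + (16 + 0*t)*Real.exp t)/8) := by
      refine Filter.eventuallyEq_of_mem (Ioo_mem_nhds h1 h2) (fun y hy => ?_)
      simp only [xex]
      rw [if_neg (by linarith [hy.1] : ¬ (y ≤ 0)), if_pos (le_of_lt hy.2)]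
      ring
    have hxt : xex t = -1 + 2 * Real.exp t := by
      simp only [xex]
      rw [if_neg (by linarith : ¬ (t ≤ 0)), if_pos (le_of_lt h2)]
    have hxd : xex (t - 2) = 1 := by
      simp only [xex]; rw [if_pos (by linarith)]
    have hu : uex (t - 1) = 0 := by
      simp only [uex]; rw [if_pos (by linarith)]
    have hval : xex t + xex (t - 2) - 10 * uex (t - 1)
        = ((0 - 0 - 0*t)*Real.exp (-t) + (0 + 16 + 0*t)*Real.exp t)/8 := by
      rw [hxt, hxd, hu]; ring
    rw [hval]
    exact (key 0 0 (-8) 16 0 t).congr_of_eventuallyEq heq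
  · -- (1,2)
    obtain ⟨h1, h2⟩ := ht
    set a := Real.exp 2 + 2 * Real.exp 4
    set b := -2 * Real.exp 2
    set d := 17 - 2 * Real.exp 2
    have heq : xex =ᶠ[nhds t]
        (fun t => ((a + b*t)*Real.exp (-t) + (-8) + (d + 0*t)*Real.exp t)/8) := by
      refine Filter.eventuallyEq_of_mem (Ioo_mem_nhds h1 h2) (fun y hy => ?_)
      simp only [xex]
      rw [if_neg (by linarith [hy.1] : ¬ (y ≤ 0)),
        if_neg (by linarith [hy.1] : ¬ (y ≤ 1)), if_pos (le_of_lt hy.2)]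
      simp only [a, b, d]; ring
    have hxt : xex t = ((a + b*t)*Real.exp (-t) + (-8) + (d + 0*t)*Real.exp t)/8 := by
      simp only [xex]
      rw [if_neg (by linarith : ¬ (t ≤ 0)), if_neg (by linarith : ¬ (t ≤ 1)),
        if_pos (le_of_lt h2)]
      simp only [a, b, d]; ring
    have hxd : xex (t - 2) = 1 := by
      simp only [xex]; rw [if_pos (by linarith)]
    have hu : uex (t - 1)
        = (Real.exp (4 - t) - (t - 1) * Real.exp (2 - t)) / 20 := by
      simp only [uex]
      rw [if_neg (by push_neg; linarith : ¬ (t - 1 < 0)), if_pos (by linarith : t - 1 < 1),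
        show (3:ℝ) - (t - 1) = 4 - t by ring, show (1:ℝ) - (t - 1) = 2 - t by ring]
    have hval : xex t + xex (t - 2) - 10 * uex (t - 1)
        = ((b - a - b*t)*Real.exp (-t) + (0 + d + 0*t)*Real.exp t)/8 := by
      rw [hxt, hxd, hu]
      simp only [a, b, d, Real.exp_sub, Real.exp_neg]
      rw [hE2, hE4]
      field_simp
      ring
    rw [hval]
    exact (key a b (-8) d 0 t).congr_of_eventuallyEq heq
  · -- (2,3)
    obtain ⟨h1, h2⟩ := ht
    set a := 2 * Real.exp 4
    set d := -47 * Real.exp (-2 : ℝ) + 17 - 2 * Real.exp 2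
    set e := 16 * Real.exp (-2 : ℝ)
    have heq : xex =ᶠ[nhds t]
        (fun t => ((a + 0*t)*Real.exp (-t) + 4 + (d + e*t)*Real.exp t)/8) := by
      refine Filter.eventuallyEq_of_mem (Ioo_mem_nhds h1 h2) (fun y hy => ?_)
      simp only [xex]
      rw [if_neg (by linarith [hy.1] : ¬ (y ≤ 0)), if_neg (by linarith [hy.1] : ¬ (y ≤ 1)),
        if_neg (by linarith [hy.1] : ¬ (y ≤ 2)), if_pos (le_of_lt hy.2)]
      simp only [a, d, e, Real.exp_sub, Real.exp_neg]
      have := Real.exp_ne_zero y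
      field_simp
      ring
    have hxt : xex t = ((a + 0*t)*Real.exp (-t) + 4 + (d + e*t)*Real.exp t)/8 := by
      simp only [xex]
      rw [if_neg (by linarith : ¬ (t ≤ 0)), if_neg (by linarith : ¬ (t ≤ 1)),
        if_neg (by linarith : ¬ (t ≤ 2)), if_pos (le_of_lt h2)]
      simp only [a, d, e, Real.exp_sub, Real.exp_neg]
      field_simp
      ring
    have hxd : xex (t - 2) = -1 + 2 * Real.exp (t - 2) := by
      simp only [xex]
      rw [if_neg (by push_neg; linarith : ¬ (t - 2 ≤ 0)), if_pos (by linarith : t - 2 ≤ 1)]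
    have hu : uex (t - 1) = (Real.exp (4 - t) - 1) / 20 := by
      simp only [uex]
      rw [if_neg (by push_neg; linarith : ¬ (t - 1 < 0)),
        if_neg (by push_neg; linarith : ¬ (t - 1 < 1)), if_pos (by linarith : t - 1 ≤ 3),
        show (3:ℝ) - (t - 1) = 4 - t by ring]
    have hval : xex t + xex (t - 2) - 10 * uex (t - 1)
        = ((0 - a - 0*t)*Real.exp (-t) + (e + d + e*t)*Real.exp t)/8 := by
      rw [hxt, hxd, hu]
      simp only [a, d, e, Real.exp_sub, Real.exp_neg]
      rw [hE2, hE4]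
      field_simp
      ring
    rw [hval]
    exact (key a 0 4 d e t).congr_of_eventuallyEq heq
  · -- (3,4)
    obtain ⟨h1, h2⟩ := ht
    set a := -Real.exp 6
    set b := Real.exp 4
    set d := -51 * Real.exp (-2 : ℝ) + 24 - 2 * Real.exp 2
    set e := 17 * Real.exp (-2 : ℝ) - 2
    have heq : xex =ᶠ[nhds t]
        (fun t => ((a + b*t)*Real.exp (-t) + 4 + (d + e*t)*Real.exp t)/8) := by
      refine Filter.eventuallyEq_of_mem (Ioo_mem_nhds h1 h2) (fun y hy => ?_)
      simp only [xex]
      rw [if_neg (by linarith [hy.1] : ¬ (y ≤ 0)), if_neg (by linarith [hy.1] : ¬ (y ≤ 1)),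
        if_neg (by linarith [hy.1] : ¬ (y ≤ 2)), if_neg (by linarith [hy.1] : ¬ (y ≤ 3))]
      simp only [a, b, d, e]; ring
    have hxt : xex t = ((a + b*t)*Real.exp (-t) + 4 + (d + e*t)*Real.exp t)/8 := by
      simp only [xex]
      rw [if_neg (by linarith : ¬ (t ≤ 0)), if_neg (by linarith : ¬ (t ≤ 1)),
        if_neg (by linarith : ¬ (t ≤ 2)), if_neg (by linarith : ¬ (t ≤ 3))]
      simp only [a, b, d, e]; ring
    have hxd : xex (t - 2)
        = ((Real.exp 2 + 2 * Real.exp 4 - 2 * Real.exp 2 * (t - 2)) * Real.exp (-(t - 2)) - 8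
          + (17 - 2 * Real.exp 2) * Real.exp (t - 2)) / 8 := by
      simp only [xex]
      rw [if_neg (by push_neg; linarith : ¬ (t - 2 ≤ 0)),
        if_neg (by push_neg; linarith : ¬ (t - 2 ≤ 1)), if_pos (by linarith : t - 2 ≤ 2)]
    have hu : uex (t - 1) = (Real.exp (4 - t) - 1) / 20 := by
      simp only [uex]
      rw [if_neg (by push_neg; linarith : ¬ (t - 1 < 0)),
        if_neg (by push_neg; linarith : ¬ (t - 1 < 1)), if_pos (by linarith : t - 1 ≤ 3),
        show (3:ℝ) - (t - 1) = 4 - t by ring]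
    have hval : xex t + xex (t - 2) - 10 * uex (t - 1)
        = ((b - a - b*t)*Real.exp (-t) + (e + d + e*t)*Real.exp t)/8 := by
      rw [hxt, hxd, hu]
      simp only [a, b, d, e, Real.exp_sub, Real.exp_neg,
        show -(t - 2) = 2 - t by ring]
      rw [hE2, hE4, hE6]
      field_simp
      ring
    rw [hval]
    exact (key a b 4 d e t).congr_of_eventuallyEq heq

end
end
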